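/- For every real x ≥ 0, (1+x)·log(1+x) − x ≥ x + 1 − √(1+2x). -/

import Mathlib

lemma log_lb_aux (x : ℝ) (hx : 0 ≤ x) : 2 * x / (2 + x) ≤ Real.log (1 + x) := by
  set f : ℝ → ℝ := fun t => Real.log (1 + t) - 2 * t / (2 + t) with hf
  have hderiv : ∀ y ∈ Set.Ici (0:ℝ),
      HasDerivAt f ((1 + y)⁻¹ - 4 / (2 + y) ^ 2) y := by
    intro y hy
    have hy0 : (0:ℝ) ≤ y := hy
    have h1y : (0:ℝ) < 1 + y := by linarith
    have h2y : (0:ℝ) < 2 + y := by linarith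
    have hlog : HasDerivAt (fun t : ℝ => Real.log (1 + t)) ((1 + y)⁻¹) y := by
      have h := (Real.hasDerivAt_log (ne_of_gt h1y)).comp y
        ((hasDerivAt_id y).const_add 1)
      simp at h
      exact h
    have hdiv : HasDerivAt (fun t : ℝ => 2 * t / (2 + t)) (4 / (2 + y) ^ 2) y := by
      have hn : HasDerivAt (fun t : ℝ => 2 * t) 2 y := by
        simpa using (hasDerivAt_id y).const_mul 2
      have hd : HasDerivAt (fun t : ℝ => 2 + t) 1 y := (hasDerivAt_id y).const_add 2
      have h := hn.div hd (ne_of_gt h2y)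
      rw [show (4:ℝ) / (2 + y) ^ 2 = (2 * (2 + y) - 2 * y * 1) / (2 + y) ^ 2 by ring]
      exact h
    exact hlog.sub hdiv
  have hmono : MonotoneOn f (Set.Ici 0) := by
    apply monotoneOn_of_deriv_nonneg (convex_Ici 0)
    · exact fun y hy => ((hderiv y hy).continuousAt).continuousWithinAt
    · intro y hy
      rw [interior_Ici] at hy
      exact ((hderiv y (Set.mem_Ici.mpr (le_of_lt hy))).differentiableAt).differentiableWithinAt
    · intro y hy
      rw [interior_Ici] at hy
      have hy0 : (0:ℝ) < y := hy
      have h1y : (0:ℝ) < 1 + y := by linarith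
      have h2y : (0:ℝ) < 2 + y := by linarith
      rw [(hderiv y (le_of_lt hy0)).deriv]
      rw [sub_nonneg, div_le_iff₀ (by positivity), inv_mul_eq_div, le_div_iff₀ h1y]
      nlinarith [sq_nonneg y]
  have h0 : f 0 ≤ f x := hmono (Set.self_mem_Ici) hx hx
  simp only [hf] at h0
  norm_num at h0
  linarith

theorem stmt_3 (x : ℝ) (hx : 0 ≤ x) :
    (1 + x) * Real.log (1 + x) - x ≥ x + 1 - Real.sqrt (1 + 2 * x) := by
  have h2x : (0:ℝ) < 2 + x := by linarith
  have hlog := log_lb_aux x hx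
  have hmul : (1 + x) * (2 * x / (2 + x)) ≤ (1 + x) * Real.log (1 + x) :=
    mul_le_mul_of_nonneg_left hlog (by linarith)
  have e1 : (1 + x) * (2 * x / (2 + x)) - x = x ^ 2 / (2 + x) := by
    field_simp; ring
  have hs : (3 * x + 2) / (2 + x) ≤ Real.sqrt (1 + 2 * x) := by
    have h1 : ((3 * x + 2) / (2 + x)) ^ 2 ≤ 1 + 2 * x := by
      rw [div_pow, div_le_iff₀ (by positivity)]
      nlinarith [pow_nonneg hx 3]
    calc (3 * x + 2) / (2 + x) = Real.sqrt (((3 * x + 2) / (2 + x)) ^ 2) :=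
          (Real.sqrt_sq (by positivity)).symm
      _ ≤ Real.sqrt (1 + 2 * x) := Real.sqrt_le_sqrt h1
  have e2 : x + 1 - (3 * x + 2) / (2 + x) = x ^ 2 / (2 + x) := by
    field_simp; ring
  linarith
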